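/- In any execution of the OTM abstract machine, each transaction name can be the source of at most one merge: once a Read2 or Write2 transition merges transaction k into transaction j (renaming every occurrence of k in the working memory Δ and in the thread family to j, with j ≠ k), the name k no longer occurs in any subsequent state of the execution, and hence no later transition can merge k into any transaction. Consequently, in the opacity graph of the corresponding history, every vertex has at most one outgoing merge-induced edge. -/

import Mathlib

/-!  A formalisation of the OTM (Open Transactional Memory) abstract machine
     of "Open Transactional Memory" (Figures 3–8), together with
     Guerraoui–Kapałka style histories and opacity graphs. -/

abbrev Loc : Type := ℕ
abbrev TrName : Type := ℕ
abbrev TId : Type := ℕ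

/-- Terms of the Haskell-like language with the OTM primitives (Fig. 3). -/
inductive Term : Type where
  | var : ℕ → Term
  | app : Term → Term → Term
  | lam : ℕ → Term → Term
  | loc : Loc → Term
  | tidT : TId → Term
  | chr : Char → Term
  | unit : Term
  | ret : Term → Term
  | bind : Term → Term → Term
  | throw : Term → Term
  | catchE : Term → Term → Term
  | putChar : Char → Term
  | getChar : Term
  | fork : Term → Term
  | atomic : Term → Term
  | isolated : Term → Term
  | retry : Term
  | orElse : Term → Term → Term
  | newOTVar : Term → Term
  | readOTVar : Loc → Term
  | writeOTVar : Loc → Term → Term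
  deriving DecidableEq

/-- Values (Fig. 3): everything except variables and applications. -/
def Term.isValue : Term → Bool
  | .var _ => false
  | .app _ _ => false
  | _ => true

/-- Pure term reductions `M → N` (Fig. 4), parameterised by the
    (otherwise unspecified) evaluation function `𝒱`. -/
inductive TermStep (V : Term → Option Term) : Term → Term → Prop where
  | eval {M N : Term} :
      M.isValue = false → V M = some N → N.isValue = true → TermStep V M N
  | bindVal {M N : Term} : TermStep V (.bind (.ret M) N) (.app N M)
  | bindRetry {M : Term} : TermStep V (.bind .retry M) .retry
  | bindThrow {M N : Term} : TermStep V (.bind (.throw N) M) (.throw N)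
  | catchRetry {M : Term} : TermStep V (.catchE .retry M) .retry
  | catchRet {M N : Term} : TermStep V (.catchE (.ret N) M) (.ret N)
  | catchThrow {M N : Term} : TermStep V (.catchE (.throw M) N) (.app N M)

/-- Evaluation contexts `𝔼 ::= [] | 𝔼 >>= M`: a context is the list of
    the second arguments of the enclosing binds. -/
abbrev Ctx : Type := List Term

/-- `plug E M` is `𝔼[M]`. -/
def plug (E : Ctx) (M : Term) : Term := E.foldl Term.bind M

/-- Threads: `⟨M⟩_t` (outside transactions) and `⟨M; N⟩_{t,k}`
    (inside transaction `k`, with continuation `N`). -/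
inductive Thread : Type where
  | plain : TId → Term → Thread
  | tx : TId → Term → Term → TrName → Thread
  deriving DecidableEq

def Thread.tid : Thread → TId
  | .plain t _ => t
  | .tx t _ _ _ => t

/-- Thread families, presented as lists (parallel composition modulo
    permutation is built into the step relation). -/
abbrev Family : Type := List Thread

def Family.tids (P : Family) : List TId := P.map Thread.tid

/-- The names of the active transactions of a family (`transactions(P)`). -/
def Family.txNames (P : Family) : List TrName :=
  P.filterMap fun T =>
    match T with
    | .tx _ _ _ k => some k
    | .plain _ _ => none

/-- The forest `Ψ` of thread identifiers. -/
structure Psi : Type where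
  nodes : Set TId
  parent : TId → Option TId

def Psi.addRoot (ψ : Psi) (t : TId) : Psi :=
  ⟨insert t ψ.nodes, ψ.parent⟩

/-- `add_child(t, t', Ψ)`. -/
def Psi.addChild (ψ : Psi) (t t' : TId) : Psi :=
  ⟨insert t' ψ.nodes, fun u => if u = t' then some t else ψ.parent u⟩

/-- `ψ.rootOf t r` : `r = root(t, Ψ)`. -/
def Psi.rootOf (ψ : Psi) (t r : TId) : Prop :=
  Relation.ReflTransGen (fun a b => ψ.parent a = some b) t r ∧ ψ.parent r = none

open Classical in
/-- `remove(r, Ψ)`: remove the whole tree rooted at `r`. -/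
noncomputable def Psi.remove (ψ : Psi) (r : TId) : Psi :=
  ⟨{t ∈ ψ.nodes | ¬ ψ.rootOf t r}, fun t => if ψ.rootOf t r then none else ψ.parent t⟩

/-- The memory `Σ = ⟨Θ, Δ, Ψ⟩` (together with the supply `used` of
    transaction names already used, guaranteeing freshness of new names). -/
structure Mem : Type where
  heap : Loc → Option Term
  work : Loc → Option (Term × TrName)
  psi : Psi
  used : Set TrName

/-- Machine states `(Σ; P)`. -/
structure MState : Type where
  mem : Mem
  threads : Family

/-- Pointwise update of a partial function. -/
def updFn {α : Type} (f : Loc → Option α) (r : Loc) (v : α) : Loc → Option α :=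
  fun s => if s = r then some v else f s

/-- `Δ[k ↦ j]` : rename every claim of transaction `k` into `j` (Fig. 8). -/
def renameWork (Δ : Loc → Option (Term × TrName)) (k j : TrName) :
    Loc → Option (Term × TrName) :=
  fun r => (Δ r).map fun p => if p.2 = k then (p.1, j) else p

def Thread.renameTx (T : Thread) (k j : TrName) : Thread :=
  match T with
  | .tx t M N k' => if k' = k then .tx t M N j else .tx t M N k'
  | .plain t M => .plain t M

/-- `P[k ↦ j]` (Fig. 8). -/
def Family.renameTx (P : Family) (k j : TrName) : Family :=
  P.map (Thread.renameTx · k j)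

/-- `cleanup(k, Σ)` (Fig. 8). -/
def cleanup (k : TrName) (Δ : Loc → Option (Term × TrName)) :
    Loc → Option (Term × TrName) := fun r =>
  match Δ r with
  | some (M, k') => if k' = k then none else some (M, k')
  | none => none

/-- `commit(k, Σ)` (Fig. 8). -/
def commitMem (k : TrName) (Θ : Loc → Option Term)
    (Δ : Loc → Option (Term × TrName)) : Loc → Option Term := fun r =>
  match Δ r with
  | some (M, k') => if k' = k then some M else Θ r
  | none => Θ r

/-- `leak(k, Σ)` (Fig. 8). -/
def leakMem (k : TrName) (Θ : Loc → Option Term)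
    (Δ : Loc → Option (Term × TrName)) : Loc → Option Term := fun r =>
  match Θ r with
  | some M => some M
  | none =>
    match Δ r with
    | some (M, k') => if k' = k then some M else none
    | none => none

/-- Operations recorded in histories (reads, writes, commits, aborts and,
    for OTM, explicit merges of one transaction into another). -/
inductive Op : Type where
  | read : TrName → Loc → Term → Op
  | write : TrName → Loc → Term → Op
  | commit : TrName → Op
  | abort : TrName → Op
  | merge : TrName → TrName → Op
  deriving DecidableEq

/-- Histories: time-ordered sequences of operations. -/
abbrev History : Type := List Op

/-- Transition labels `β` (Figs. 5–7). -/
inductive Label : Type where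
  | tau : Label
  | inpC : Char → Label
  | outC : Char → Label
  | newT : TrName → Label
  | co : TrName → Label
  | ab : TrName → TId → Term → Label
  | abBar : TrName → TId → Term → Label
  deriving DecidableEq

/-- `transaction(β)` (Fig. 8). -/
def Label.txName : Label → Option TrName
  | .newT k => some k
  | .co k => some k
  | .ab k _ _ => some k
  | .abBar k _ _ => some k
  | _ => none

mutual
  /-- The state transitions `(Σ; P) --β--> (Σ'; P')` of the OTM abstract
      machine (Figs. 5, 6 and 7), instrumented with the list of history
      operations the transition issues. -/
  inductive Step (V : Term → Option Term) :
      MState → Label → List Op → MState → Prop where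
    /- structural congruence: `∥` is commutative and associative -/
    | permC {m m' : Mem} {P Q P' Q' : Family} {β : Label} {ops : List Op} :
        List.Perm P Q → List.Perm P' Q' →
        Step V ⟨m, P⟩ β ops ⟨m', P'⟩ → Step V ⟨m, Q⟩ β ops ⟨m', Q'⟩
    /- IO transitions (Fig. 5) -/
    | inChar {m : Mem} {P : Family} {E : Ctx} {t : TId} {c : Char} :
        Step V ⟨m, .plain t (plug E .getChar) :: P⟩ (.inpC c) []
               ⟨m, .plain t (plug E (.ret (.chr c))) :: P⟩
    | outChar {m : Mem} {P : Family} {E : Ctx} {t : TId} {c : Char} :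
        Step V ⟨m, .plain t (plug E (.putChar c)) :: P⟩ (.outC c) []
               ⟨m, .plain t (plug E (.ret .unit)) :: P⟩
    | termIO {m : Mem} {P : Family} {E : Ctx} {t : TId} {M N : Term} :
        TermStep V M N →
        Step V ⟨m, .plain t (plug E M) :: P⟩ .tau []
               ⟨m, .plain t (plug E N) :: P⟩
    | forkIO {m : Mem} {P : Family} {E : Ctx} {t t' : TId} {M : Term} :
        t' ∉ Family.tids (.plain t (plug E (.fork M)) :: P) →
        Step V ⟨m, .plain t (plug E (.fork M)) :: P⟩ .tau []
               ⟨{m with psi := m.psi.addRoot t'},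
                .plain t (plug E (.ret (.tidT t'))) :: .plain t' M :: P⟩
    /- transactional τ-transitions (Fig. 6) -/
    | termT {m : Mem} {P : Family} {E : Ctx} {t : TId} {k : TrName} {M M' N : Term} :
        TermStep V M M' →
        Step V ⟨m, .tx t (plug E M) N k :: P⟩ .tau []
               ⟨m, .tx t (plug E M') N k :: P⟩
    | forkT {m : Mem} {P : Family} {E : Ctx} {t t' : TId} {k : TrName} {M N : Term} :
        t' ∉ Family.tids (.tx t (plug E (.fork M)) N k :: P) →
        Step V ⟨m, .tx t (plug E (.fork M)) N k :: P⟩ .tau []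
               ⟨{m with psi := m.psi.addChild t t'},
                .tx t (plug E (.ret (.tidT t'))) N k :: .tx t' M (.ret .unit) k :: P⟩
    | newVar {m : Mem} {P : Family} {E : Ctx} {t : TId} {k : TrName} {M N : Term} {r : Loc} :
        m.heap r = none → m.work r = none →
        Step V ⟨m, .tx t (plug E (.newOTVar M)) N k :: P⟩ .tau [.write k r M]
               ⟨{m with work := updFn m.work r (M, k)},
                .tx t (plug E (.ret (.loc r))) N k :: P⟩
    | read1 {m : Mem} {P : Family} {E : Ctx} {t : TId} {k : TrName} {M N : Term} {r : Loc} :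
        m.work r = none → m.heap r = some M →
        Step V ⟨m, .tx t (plug E (.readOTVar r)) N k :: P⟩ .tau [.read k r M]
               ⟨{m with work := updFn m.work r (M, k)},
                .tx t (plug E (.ret M)) N k :: P⟩
    | read2 {m : Mem} {P : Family} {E : Ctx} {t : TId} {k j : TrName} {M N : Term} {r : Loc} :
        m.work r = some (M, j) →
        Step V ⟨m, .tx t (plug E (.readOTVar r)) N k :: P⟩ .tau
               (if k = j then [.read k r M] else [.merge k j, .read j r M])
               ⟨{m with work := renameWork m.work k j},
                Family.renameTx (.tx t (plug E (.ret M)) N k :: P) k j⟩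
    | write1 {m : Mem} {P : Family} {E : Ctx} {t : TId} {k : TrName} {M N : Term} {r : Loc} :
        m.work r = none →
        Step V ⟨m, .tx t (plug E (.writeOTVar r M)) N k :: P⟩ .tau [.write k r M]
               ⟨{m with work := updFn m.work r (M, k)},
                .tx t (plug E (.ret .unit)) N k :: P⟩
    | write2 {m : Mem} {P : Family} {E : Ctx} {t : TId} {k j : TrName} {M M₀ N : Term} {r : Loc} :
        m.work r = some (M₀, j) →
        Step V ⟨m, .tx t (plug E (.writeOTVar r M)) N k :: P⟩ .tau
               (if k = j then [.write k r M] else [.merge k j, .write j r M])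
               ⟨{m with work := updFn (renameWork m.work k j) r (M, j)},
                Family.renameTx (.tx t (plug E (.ret .unit)) N k :: P) k j⟩
    | orElse1 {m m' : Mem} {P Q₁ Q₂ : Family} {E : Ctx} {t : TId} {k j : TrName}
        {M M' N N' R : Term} {ops : List Op} :
        (R = .ret N' ∨ R = .throw N') →
        StepTauStar V ⟨m, .tx t M (.ret .unit) k :: P⟩ ops
                       ⟨m', Q₁ ++ .tx t R (.ret .unit) j :: Q₂⟩ →
        Step V ⟨m, .tx t (plug E (.orElse M M')) N k :: P⟩ .tau ops
               ⟨m', Q₁ ++ .tx t (plug E R) N j :: Q₂⟩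
    | orElse2 {m m' : Mem} {P Q₁ Q₂ : Family} {E : Ctx} {t : TId} {k j : TrName}
        {M M' N : Term} {ops : List Op} :
        StepTauStar V ⟨m, .tx t M (.ret .unit) k :: P⟩ ops
                       ⟨m', Q₁ ++ .tx t .retry (.ret .unit) j :: Q₂⟩ →
        Step V ⟨m, .tx t (plug E (.orElse M M')) N k :: P⟩ .tau []
               ⟨m, .tx t (plug E M') N k :: P⟩
    | isolatedR {m m' : Mem} {P Q₁ Q₂ : Family} {E : Ctx} {t : TId} {k j : TrName}
        {M N N' R : Term} {ops : List Op} :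
        (R = .ret N' ∨ R = .throw N') →
        StepTauStar V ⟨m, .tx t M (.ret .unit) k :: P⟩ ops
                       ⟨m', Q₁ ++ .tx t R (.ret .unit) j :: Q₂⟩ →
        Step V ⟨m, .tx t (plug E (.isolated M)) N k :: P⟩ .tau ops
               ⟨m', Q₁ ++ .tx t (plug E R) N j :: Q₂⟩
    /- transaction management transitions (Fig. 7) -/
    | newTx {m : Mem} {t : TId} {M N : Term} {k : TrName} :
        k ∉ m.used →
        Step V ⟨m, [.plain t (.bind (.atomic M) N)]⟩ (.newT k) []
               ⟨{m with used := insert k m.used}, [.tx t M N k]⟩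
    | commitTx {m : Mem} {t : TId} {M N : Term} {k : TrName} :
        Step V ⟨m, [.tx t (.ret M) N k]⟩ (.co k) [.commit k]
               ⟨{m with heap := commitMem k m.heap m.work,
                        work := cleanup k m.work},
                [.plain t (.bind (.ret M) N)]⟩
    | abort1 {m : Mem} {t : TId} {M N : Term} {k : TrName} {r : TId} :
        m.psi.rootOf t r →
        Step V ⟨m, [.tx t (.throw M) N k]⟩ (.ab k t M) [.abort k]
               ⟨{m with heap := leakMem k m.heap m.work,
                        work := cleanup k m.work,
                        psi := m.psi.remove r},
                [.plain t (.bind (.throw M) N)]⟩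
    | abort2 {m : Mem} {t t' : TId} {M M' N : Term} {k : TrName} {r : TId} :
        m.psi.rootOf t r → m.psi.rootOf t' r →
        Step V ⟨m, [.tx t' M' N k]⟩ (.abBar k t M) []
               ⟨{m with heap := leakMem k m.heap m.work,
                        work := cleanup k m.work,
                        psi := m.psi.remove r},
                [.plain t' (.bind (.throw M) N)]⟩
    | abort3 {m : Mem} {t t' : TId} {M M' N : Term} {k : TrName} {r : TId} :
        m.psi.rootOf t r → ¬ m.psi.rootOf t' r →
        Step V ⟨m, [.tx t' M' N k]⟩ (.abBar k t M) []
               ⟨{m with heap := leakMem k m.heap m.work,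
                        work := cleanup k m.work,
                        psi := m.psi.remove r},
                [.plain t' .retry]⟩
    | mcastAb {m m' : Mem} {P P' Q Q' : Family} {k : TrName} {t : TId} {M : Term}
        {ops₁ ops₂ : List Op} :
        Step V ⟨m, P⟩ (.ab k t M) ops₁ ⟨m', P'⟩ →
        Step V ⟨m, Q⟩ (.abBar k t M) ops₂ ⟨m', Q'⟩ →
        Step V ⟨m, P ++ Q⟩ (.ab k t M) (ops₁ ++ ops₂) ⟨m', P' ++ Q'⟩
    | mcastCo {m m' : Mem} {P P' Q Q' : Family} {k : TrName} {ops₁ ops₂ : List Op} :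
        Step V ⟨m, P⟩ (.co k) ops₁ ⟨m', P'⟩ →
        Step V ⟨m, Q⟩ (.co k) ops₂ ⟨m', Q'⟩ →
        Step V ⟨m, P ++ Q⟩ (.co k) ((ops₁ ++ ops₂).dedup) ⟨m', P' ++ Q'⟩
    | mcastGroup {m m' : Mem} {P P' Q : Family} {β : Label} {k : TrName} {ops : List Op} :
        Step V ⟨m, P⟩ β ops ⟨m', P'⟩ →
        β.txName = some k → k ∉ Family.txNames Q →
        Step V ⟨m, P ++ Q⟩ β ops ⟨m', P' ++ Q⟩

  /-- Reflexive-transitive closure of internal (`τ`) transitions,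
      accumulating the issued operations. -/
  inductive StepTauStar (V : Term → Option Term) :
      MState → List Op → MState → Prop where
    | refl (s : MState) : StepTauStar V s [] s
    | cons {s₁ s₂ s₃ : MState} {ops₁ ops₂ : List Op} :
        Step V s₁ .tau ops₁ s₂ → StepTauStar V s₂ ops₂ s₃ →
        StepTauStar V s₁ (ops₁ ++ ops₂) s₃
end

/-- Executions of the abstract machine, together with the history
    (sequence of issued operations) they generate. -/
inductive Exec (V : Term → Option Term) : MState → History → MState → Prop where
  | refl (s : MState) : Exec V s [] s
  | step {s₁ s₂ s₃ : MState} {β : Label} {ops : List Op} {H : History} :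
      Step V s₁ β ops s₂ → Exec V s₂ H s₃ → Exec V s₁ (ops ++ H) s₃

/-- The initial state of an OTM program `M` run by a main thread `t`. -/
def initState (M : Term) (t : TId) : MState :=
  ⟨⟨fun _ => none, fun _ => none, ⟨{t}, fun _ => none⟩, ∅⟩, [.plain t M]⟩

/-- `H` is a history describing an execution of an OTM program. -/
def OTMHistory (H : History) : Prop :=
  ∃ (V : Term → Option Term) (M : Term) (t : TId) (s : MState),
    Exec V (initState M t) H s

/-! ### Histories, local operations and opacity graphs (Guerraoui–Kapałka) -/

/-- The transaction issuing an operation. -/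
def Op.tx : Op → TrName
  | .read k _ _ => k
  | .write k _ _ => k
  | .commit k => k
  | .abort k => k
  | .merge k _ => k

def Op.loc? : Op → Option Loc
  | .read _ r _ => some r
  | .write _ r _ => some r
  | _ => none

def Op.isWrite : Op → Bool
  | .write _ _ _ => true
  | _ => false

/-- `op` is an operation by transaction `k` on location `r`. -/
def Op.touches (op : Op) (k : TrName) (r : Loc) : Bool :=
  op.tx == k && op.loc? == some r

/-- The transactions occurring in a history. -/
def History.txs (H : History) : List TrName :=
  H.flatMap fun op =>
    match op with
    | .merge k j => [k, j]
    | op => [op.tx]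

/-- The last operation by `k` on `r` strictly before position `i`. -/
def History.prevOn (H : History) (k : TrName) (r : Loc) (i : ℕ) : Option Op :=
  ((H.take i).filter (fun op => op.touches k r)).getLast?

/-- The first operation by `k` on `r` strictly after position `i`. -/
def History.nextOn (H : History) (k : TrName) (r : Loc) (i : ℕ) : Option Op :=
  ((H.drop (i + 1)).filter (fun op => op.touches k r)).head?

/-- The operation at position `i` of `H` is local: a read whose previous
    operation by the same transaction on the same location is a write, or a
    write whose next operation by the same transaction on the same location
    is a write. -/
def History.localIdx (H : History) (i : ℕ) : Bool :=
  match H[i]? with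
  | some (.read k r _) =>
    match H.prevOn k r i with
    | some op => op.isWrite
    | none => false
  | some (.write k r _) =>
    match H.nextOn k r i with
    | some op => op.isWrite
    | none => false
  | _ => false

/-- `nonlocal(H)`: the longest sub-history of `H` without local operations. -/
def History.nonlocal (H : History) : History :=
  ((List.range H.length).filter (fun i => ! H.localIdx i)).filterMap
    (fun i => H[i]?)

def History.committed (H : History) (k : TrName) : Prop := Op.commit k ∈ H

def History.aborted (H : History) (k : TrName) : Prop := Op.abort k ∈ H

/-- A vertex/transaction is red iff it is running or aborted,
    i.e. not committed. -/
def History.red (H : History) (k : TrName) : Prop := ¬ H.committed k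

/-- `k` is live (running) in `H`. -/
def History.live (H : History) (k : TrName) : Prop :=
  k ∈ H.txs ∧ ¬ H.committed k ∧ ¬ H.aborted k

/-- `a ≺_H b`: `a` becomes committed or aborted in `H` before `b` issues
    its first operation. -/
def History.happensBefore (H : History) (a b : TrName) : Prop :=
  ∃ i, (H[(i : ℕ)]? = some (.commit a) ∨ H[(i : ℕ)]? = some (.abort a)) ∧
    ∀ j op, H[(j : ℕ)]? = some op → op.tx = b → i < j

/-- `k` reads (the value of) location `r` from `k'` in `H`. -/
def History.readsFromAt (H : History) (k k' : TrName) (r : Loc) : Prop :=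
  ∃ i j v, i < j ∧
    H[(i : ℕ)]? = some (.write k' r v) ∧
    H[(j : ℕ)]? = some (.read k r v) ∧
    ∀ l op, i < l → l < j → H[(l : ℕ)]? = some op →
      op.isWrite = true → op.loc? ≠ some r

/-- `k` reads something written by `k'` (merges are dependencies of this
    kind: a merge amounts to reading a fresh location written by `k'`). -/
def History.readsFrom (H : History) (k k' : TrName) : Prop :=
  (∃ r, H.readsFromAt k k' r) ∨ Op.merge k k' ∈ H

/-- The edge relation of the opacity graph `OPG(H, ≪)` (cases (a)–(d)). -/
def OPGEdge (H : History) (lt : TrName → TrName → Prop) (k k' : TrName) : Prop :=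
  H.happensBefore k' k
  ∨ H.readsFrom k k'
  ∨ (lt k' k ∧ ∃ r, (∃ v, Op.read k' r v ∈ H) ∧ (∃ v, Op.write k r v ∈ H))
  ∨ (H.committed k' ∧
      ∃ r k'', lt k' k'' ∧ (∃ v, Op.write k' r v ∈ H) ∧ H.readsFromAt k'' k r)

/-- An edge of `OPG(H, ≪)` is red iff case (b) applies. -/
def OPGRedEdge (H : History) (k k' : TrName) : Prop := H.readsFrom k k'

/-- `OPG(H, ≪)` is well-formed: all edges leaving red vertices are red. -/
def OPGWellFormed (H : History) (lt : TrName → TrName → Prop) : Prop :=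
  ∀ k k', OPGEdge H lt k k' → H.red k → OPGRedEdge H k k'

/-- `OPG(H, ≪)` is acyclic. -/
def OPGAcyclic (H : History) (lt : TrName → TrName → Prop) : Prop :=
  ∀ k, ¬ Relation.TransGen (OPGEdge H lt) k k

/-- `lt` is a total order on the transactions of `H`. -/
def TotalOrderOn (H : History) (lt : TrName → TrName → Prop) : Prop :=
  (∀ k, ¬ lt k k) ∧ (∀ a b c, lt a b → lt b c → lt a c) ∧
  (∀ k, k ∈ H.txs → ∀ k', k' ∈ H.txs → k ≠ k' → lt k k' ∨ lt k' k)

/-- `complete(H)`: `H` extended with a commit or an abort for every live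
    transaction of `H`. -/
def IsCompletion (H H' : History) : Prop :=
  ∃ C : History, H' = H ++ C ∧
    (∀ op ∈ C, (∃ k, op = Op.commit k ∨ op = Op.abort k) ∧ H.live op.tx) ∧
    (∀ k, H.live k → ∃ op ∈ C, Op.tx op = k) ∧
    C.Pairwise (fun a b => Op.tx a ≠ Op.tx b)

/-- Two histories are equivalent: same operations, and each transaction
    issues the same sequence of operations in both. -/
def EquivHist (S H : History) : Prop :=
  S.Perm H ∧ ∀ k, S.filter (fun op => op.tx == k) = H.filter (fun op => op.tx == k)

/-- A history is sequential if its happens-before relation is total. -/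
def SequentialHist (S : History) : Prop :=
  ∀ k, k ∈ S.txs → ∀ k', k' ∈ S.txs → k ≠ k' →
    S.happensBefore k k' ∨ S.happensBefore k' k

/-- Local consistency: every local read is preceded by a write (by the same
    transaction, on the same location) writing the read value. -/
def LocallyConsistent (H : History) : Prop :=
  ∀ i k r v, H[i]? = some (.read k r v) → H.localIdx i = true →
    H.prevOn k r i = some (.write k r v)

/-- Consistency of a history. -/
def Consistent (H : History) : Prop :=
  LocallyConsistent H ∧
  ∀ k r v, Op.read k r v ∈ H.nonlocal → ∃ k', Op.write k' r v ∈ H.nonlocal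

/-! ### STATEMENT 5 -/

/-- `k` occurs in state `s` (as the transaction of a thread or as the owner
    of a claimed location). -/
def OccursIn (k : TrName) (s : MState) : Prop :=
  k ∈ Family.txNames s.threads ∨ ∃ r M, s.mem.work r = some (M, k)

/-! ### Auxiliary machinery for STATEMENT 5 -/

def InvUsed (s : MState) : Prop := ∀ k, OccursIn k s → k ∈ s.mem.used

def NoK (k : TrName) (s : MState) : Prop := ¬ OccursIn k s ∧ k ∈ s.mem.used

def Good (s : MState) (ops : List Op) (s' : MState) : Prop :=
  InvUsed s →
    InvUsed s' ∧ s.mem.used ⊆ s'.mem.used ∧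
    (∀ k, NoK k s → NoK k s' ∧ ∀ j, Op.merge k j ∉ ops) ∧
    (∀ k j, Op.merge k j ∈ ops →
      j ≠ k ∧ NoK k s' ∧ ∀ j₂, Op.merge k j₂ ∈ ops → j₂ = j)

lemma good_refl (s : MState) : Good s [] s :=
  fun h => ⟨h, fun _ hx => hx, fun _ hk => ⟨hk, by simp⟩, by simp⟩

lemma good_comp {s₁ s₂ s₃ : MState} {ops₁ ops₂ : List Op}
    (g1 : Good s₁ ops₁ s₂) (g2 : Good s₂ ops₂ s₃) :
    Good s₁ (ops₁ ++ ops₂) s₃ := by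
  intro h1
  obtain ⟨i2, su1, pres1, mg1⟩ := g1 h1
  obtain ⟨i3, su2, pres2, mg2⟩ := g2 i2
  refine ⟨i3, fun x hx => su2 (su1 hx), ?_, ?_⟩
  · intro k hk
    obtain ⟨hk2, hn1⟩ := pres1 k hk
    obtain ⟨hk3, hn2⟩ := pres2 k hk2
    refine ⟨hk3, fun j hj => ?_⟩
    rcases List.mem_append.1 hj with h | h
    exacts [hn1 j h, hn2 j h]
  · intro k j hj
    rcases List.mem_append.1 hj with h | h
    · obtain ⟨hne, hk2, huniq⟩ := mg1 k j h
      obtain ⟨hk3, hn2⟩ := pres2 k hk2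
      refine ⟨hne, hk3, fun j₂ hj₂ => ?_⟩
      rcases List.mem_append.1 hj₂ with h2 | h2
      · exact huniq j₂ h2
      · exact absurd h2 (hn2 j₂)
    · have hno1 : ∀ j₂, Op.merge k j₂ ∉ ops₁ := by
        intro j₂ hj₂
        obtain ⟨_, hk2, _⟩ := mg1 k j₂ hj₂
        exact (pres2 k hk2).2 j h
      obtain ⟨hne, hk3, huniq⟩ := mg2 k j h
      refine ⟨hne, hk3, fun j₂ hj₂ => ?_⟩
      rcases List.mem_append.1 hj₂ with h2 | h2
      · exact absurd h2 (hno1 j₂)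
      · exact huniq j₂ h2

@[simp] lemma txNames_nil : Family.txNames ([] : Family) = [] := rfl
@[simp] lemma txNames_cons_tx (t : TId) (M N : Term) (k : TrName) (P : Family) :
    Family.txNames (Thread.tx t M N k :: P) = k :: Family.txNames P := rfl
@[simp] lemma txNames_cons_plain (t : TId) (M : Term) (P : Family) :
    Family.txNames (Thread.plain t M :: P) = Family.txNames P := rfl
@[simp] lemma txNames_append (P Q : Family) :
    Family.txNames (P ++ Q) = Family.txNames P ++ Family.txNames Q :=
  List.filterMap_append

lemma txNames_renameTx (P : Family) (k j : TrName) :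
    Family.txNames (Family.renameTx P k j)
      = (Family.txNames P).map (fun x => if x = k then j else x) := by
  induction P with
  | nil => rfl
  | cons T P ih =>
    cases T with
    | plain t M => simpa [Family.renameTx, Thread.renameTx] using ih
    | tx t M N k' =>
      by_cases h : k' = k <;>
        simp_all [Family.renameTx, Thread.renameTx]

lemma txNames_perm {P Q : Family} (h : List.Perm P Q) :
    List.Perm (Family.txNames P) (Family.txNames Q) := h.filterMap _

structure SEquiv (s s' : MState) : Prop where
  work : s.mem.work = s'.mem.work
  used : s.mem.used = s'.mem.used
  names : ∀ k, k ∈ Family.txNames s.threads ↔ k ∈ Family.txNames s'.threads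

lemma SEquiv.occurs {s s' : MState} (h : SEquiv s s') (k : TrName) :
    OccursIn k s ↔ OccursIn k s' := by
  unfold OccursIn
  rw [h.work]
  exact or_congr (h.names k) Iff.rfl

lemma SEquiv.invUsed {s s' : MState} (h : SEquiv s s') : InvUsed s ↔ InvUsed s' := by
  unfold InvUsed
  constructor <;> intro hi k hk
  · rw [← h.used]; exact hi k ((h.occurs k).2 hk)
  · rw [h.used]; exact hi k ((h.occurs k).1 hk)

lemma SEquiv.noK {s s' : MState} (h : SEquiv s s') (k : TrName) :
    NoK k s ↔ NoK k s' := by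
  unfold NoK
  rw [h.occurs k, h.used]

lemma good_sequiv {s₁ s₁' s₂ s₂' : MState} {ops : List Op}
    (e1 : SEquiv s₁ s₁') (e2 : SEquiv s₂ s₂')
    (g : Good s₁' ops s₂') : Good s₁ ops s₂ := by
  intro h1
  obtain ⟨i2, su, pres, mg⟩ := g (e1.invUsed.1 h1)
  refine ⟨e2.invUsed.2 i2, by rw [e1.used, e2.used]; exact su, ?_, ?_⟩
  · intro k hk
    obtain ⟨h1', h2'⟩ := pres k ((e1.noK k).1 hk)
    exact ⟨(e2.noK k).2 h1', h2'⟩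
  · intro k j hj
    obtain ⟨a, b, c⟩ := mg k j hj
    exact ⟨a, (e2.noK k).2 b, c⟩

lemma good_nomerge_sequiv {s s' : MState} (e : SEquiv s s') (ops : List Op)
    (h : ∀ k j, Op.merge k j ∉ ops) : Good s ops s' := by
  intro hI
  refine ⟨e.invUsed.1 hI, by rw [e.used], fun k hk => ⟨(e.noK k).1 hk, fun j => h k j⟩,
    fun k j hj => absurd hj (h k j)⟩

lemma occurs_append {m : Mem} {P Q : Family} {c : TrName} :
    OccursIn c ⟨m, P ++ Q⟩ ↔
      (c ∈ Family.txNames P ∨ c ∈ Family.txNames Q ∨ ∃ r M, m.work r = some (M, c)) := by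
  simp [OccursIn, or_assoc]

lemma merge_tau {V : Term → Option Term} :
    ∀ {s : MState} {β : Label} {ops : List Op} {s' : MState}, Step V s β ops s' →
      ∀ k j, Op.merge k j ∈ ops → β = Label.tau := by
  intro s β ops s' h
  induction h using Step.rec (motive_2 := fun _ _ _ _ => True) with
  | permC _ _ _ ih => exact ih
  | read2 _ => intro k j _; rfl
  | write2 _ => intro k j _; rfl
  | orElse1 _ _ _ => intro k j _; rfl
  | isolatedR _ _ _ => intro k j _; rfl
  | orElse2 _ _ => intro k j h; simp at h
  | mcastAb h1 h2 ih1 ih2 =>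
    intro k j h
    rcases List.mem_append.1 h with h | h
    · exact absurd (ih1 k j h) (by simp)
    · exact absurd (ih2 k j h) (by simp)
  | mcastCo h1 h2 ih1 ih2 =>
    intro k j h
    rcases List.mem_append.1 (List.mem_dedup.1 h) with h | h
    · exact absurd (ih1 k j h) (by simp)
    · exact absurd (ih2 k j h) (by simp)
  | mcastGroup h1 hβ hQ ih => exact ih
  | refl => trivial
  | cons _ _ _ _ => trivial
  | _ => intro k j h; simp at h

lemma good_newclaim (m : Mem) (t : TId) (k₀ : TrName) (A B N Mv : Term) (P : Family)
    (r : Loc) (ops : List Op) (hops : ∀ k j, Op.merge k j ∉ ops) :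
    Good ⟨m, .tx t A N k₀ :: P⟩ ops
         ⟨{m with work := updFn m.work r (Mv, k₀)}, .tx t B N k₀ :: P⟩ := by
  intro hI
  refine ⟨?_, fun x hx => hx, ?_, fun c j hj => absurd hj (hops c j)⟩
  · intro c hc
    rcases hc with hc | ⟨r', M', hr'⟩
    · exact hI c (Or.inl hc)
    · by_cases hrr : r' = r
      · have : c = k₀ := by simp [updFn, hrr] at hr'; exact hr'.2.symm
        exact hI c (Or.inl (by simp [this]))
      · exact hI c (Or.inr ⟨r', M', by simpa [updFn, hrr] using hr'⟩)
  · rintro c ⟨hno, hcU⟩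
    have hck : c ≠ k₀ := fun h => hno (Or.inl (by simp [h]))
    refine ⟨⟨?_, hcU⟩, fun j => hops c j⟩
    rintro (hc | ⟨r', M', hr'⟩)
    · exact hno (Or.inl hc)
    · by_cases hrr : r' = r
      · simp [updFn, hrr] at hr'
        exact hck hr'.2.symm
      · exact hno (Or.inr ⟨r', M', by simpa [updFn, hrr] using hr'⟩)

lemma cleanup_some {k₀ : TrName} {Δ : Loc → Option (Term × TrName)} {r : Loc}
    {M : Term} {c : TrName} (h : cleanup k₀ Δ r = some (M, c)) :
    Δ r = some (M, c) := by
  unfold cleanup at h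
  rcases hΔ : Δ r with _ | ⟨M', c'⟩ <;> rw [hΔ] at h
  · simp at h
  · by_cases hc : c' = k₀ <;> simp [hc] at h
    rcases h with ⟨h1, h2⟩
    simp [h1, h2]

lemma good_cleanup (m : Mem) (heap' : Loc → Option Term) (psi' : Psi)
    (t t' : TId) (Mx N X : Term) (k₀ : TrName) (ops : List Op)
    (hops : ∀ k j, Op.merge k j ∉ ops) :
    Good ⟨m, [Thread.tx t Mx N k₀]⟩ ops
         ⟨⟨heap', cleanup k₀ m.work, psi', m.used⟩, [Thread.plain t' X]⟩ := by
  intro hI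
  refine ⟨?_, fun x hx => hx, ?_, fun c j hj => absurd hj (hops c j)⟩
  · intro c hc
    rcases hc with hc | ⟨r, M', hr⟩
    · simp at hc
    · exact hI c (Or.inr ⟨r, M', cleanup_some hr⟩)
  · rintro c ⟨hno, hcU⟩
    refine ⟨⟨?_, hcU⟩, fun j => hops c j⟩
    rintro (hc | ⟨r, M', hr⟩)
    · simp at hc
    · exact hno (Or.inr ⟨r, M', cleanup_some hr⟩)

lemma renameWork_self (Δ : Loc → Option (Term × TrName)) (k : TrName) :
    renameWork Δ k k = Δ := by
  funext r
  unfold renameWork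
  cases hΔ : Δ r with
  | none => rfl
  | some p =>
    simp only [Option.map_some]
    split <;> simp_all [Prod.ext_iff]

lemma renameTx_self (P : Family) (k : TrName) : Family.renameTx P k k = P := by
  induction P with
  | nil => rfl
  | cons T P ih =>
    cases T with
    | plain t M => simpa [Family.renameTx, Thread.renameTx] using ih
    | tx t M N k' =>
      by_cases h : k' = k <;> simp_all [Family.renameTx, Thread.renameTx]

lemma occurs_append_l {m : Mem} {P Q : Family} {c : TrName}
    (h : OccursIn c ⟨m, P⟩) : OccursIn c ⟨m, P ++ Q⟩ := by
  rcases h with h | h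
  · exact Or.inl (by rw [txNames_append]; exact List.mem_append.2 (Or.inl h))
  · exact Or.inr h

lemma occurs_append_r {m : Mem} {P Q : Family} {c : TrName}
    (h : OccursIn c ⟨m, Q⟩) : OccursIn c ⟨m, P ++ Q⟩ := by
  rcases h with h | h
  · exact Or.inl (by rw [txNames_append]; exact List.mem_append.2 (Or.inr h))
  · exact Or.inr h

lemma invUsed_append_left {m : Mem} {P Q : Family} (h : InvUsed ⟨m, P ++ Q⟩) :
    InvUsed ⟨m, P⟩ := fun c hc => h c (occurs_append_l hc)

lemma invUsed_append_right {m : Mem} {P Q : Family} (h : InvUsed ⟨m, P ++ Q⟩) :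
    InvUsed ⟨m, Q⟩ := fun c hc => h c (occurs_append_r hc)

lemma noK_append {m : Mem} {P Q : Family} {c : TrName} (h : NoK c ⟨m, P ++ Q⟩) :
    NoK c ⟨m, P⟩ ∧ NoK c ⟨m, Q⟩ :=
  ⟨⟨fun hh => h.1 (occurs_append_l hh), h.2⟩, ⟨fun hh => h.1 (occurs_append_r hh), h.2⟩⟩

lemma noK_append_intro {m : Mem} {P Q : Family} {c : TrName}
    (h1 : NoK c ⟨m, P⟩) (h2 : NoK c ⟨m, Q⟩) : NoK c ⟨m, P ++ Q⟩ := by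
  refine ⟨fun hh => ?_, h1.2⟩
  rcases occurs_append.1 hh with hc | hc | hc
  · exact h1.1 (Or.inl hc)
  · exact h2.1 (Or.inl hc)
  · exact h1.1 (Or.inr hc)

lemma step_good {V : Term → Option Term} :
    ∀ {s : MState} {β : Label} {ops : List Op} {s' : MState},
      Step V s β ops s' → Good s ops s' := by
  intro s β ops s' h
  induction h using Step.rec (motive_2 := fun s ops s' _ => Good s ops s') with
  | permC hPQ hPQ' _ ih =>
    refine good_sequiv ?_ ?_ ih
    · exact ⟨rfl, rfl, fun c => ((txNames_perm hPQ).mem_iff).symm⟩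
    · exact ⟨rfl, rfl, fun c => ((txNames_perm hPQ').mem_iff).symm⟩
  | inChar => exact good_nomerge_sequiv ⟨rfl, rfl, fun c => Iff.rfl⟩ _ (by simp)
  | outChar => exact good_nomerge_sequiv ⟨rfl, rfl, fun c => Iff.rfl⟩ _ (by simp)
  | termIO _ => exact good_nomerge_sequiv ⟨rfl, rfl, fun c => Iff.rfl⟩ _ (by simp)
  | forkIO _ => exact good_nomerge_sequiv ⟨rfl, rfl, fun c => Iff.rfl⟩ _ (by simp)
  | termT _ => exact good_nomerge_sequiv ⟨rfl, rfl, fun c => Iff.rfl⟩ _ (by simp)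
  | forkT _ =>
    refine good_nomerge_sequiv ?_ [] (by simp)
    refine ⟨rfl, rfl, fun c => ?_⟩
    rw [txNames_cons_tx, txNames_cons_tx, txNames_cons_tx]
    simp only [List.mem_cons]
    tauto
  | orElse2 _ _ => exact good_nomerge_sequiv ⟨rfl, rfl, fun c => Iff.rfl⟩ _ (by simp)
  | newVar _ _ => exact good_newclaim _ _ _ _ _ _ _ _ _ _ (by simp)
  | read1 _ _ => exact good_newclaim _ _ _ _ _ _ _ _ _ _ (by simp)
  | write1 _ => exact good_newclaim _ _ _ _ _ _ _ _ _ _ (by simp)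
  | orElse1 _ _ ih =>
    refine good_sequiv ?_ ?_ ih
    · exact ⟨rfl, rfl, fun c => Iff.rfl⟩
    · exact ⟨rfl, rfl, fun c => by simp⟩
  | isolatedR _ _ ih =>
    refine good_sequiv ?_ ?_ ih
    · exact ⟨rfl, rfl, fun c => Iff.rfl⟩
    · exact ⟨rfl, rfl, fun c => by simp⟩
  | commitTx => exact good_cleanup _ _ _ _ _ _ _ _ _ _ (by simp)
  | abort1 _ => exact good_cleanup _ _ _ _ _ _ _ _ _ _ (by simp)
  | abort2 _ _ => exact good_cleanup _ _ _ _ _ _ _ _ _ _ (by simp)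
  | abort3 _ _ => exact good_cleanup _ _ _ _ _ _ _ _ _ _ (by simp)
  | newTx a =>
    rename_i m t M N k
    intro hI
    refine ⟨?_, Set.subset_insert _ _, ?_, by simp⟩
    · intro c hc
      rcases hc with hc | ⟨r, M', hr⟩
      · simp at hc
        subst hc
        exact Set.mem_insert _ _
      · exact Set.mem_insert_iff.2 (Or.inr (hI c (Or.inr ⟨r, M', hr⟩)))
    · rintro c ⟨hno, hcU⟩
      have hck : c ≠ k := fun h => a (h ▸ hcU)
      refine ⟨⟨?_, Set.mem_insert_iff.2 (Or.inr hcU)⟩, by simp⟩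
      rintro (hc | ⟨r, M', hr⟩)
      · simp at hc
        exact hck hc
      · exact hno (Or.inr ⟨r, M', hr⟩)
  | read2 a =>
    rename_i m P E t k j M N r
    by_cases hkj : k = j
    · subst hkj
      rw [renameWork_self, renameTx_self]
      exact good_nomerge_sequiv ⟨rfl, rfl, fun c => Iff.rfl⟩ _ (by simp)
    · rw [if_neg hkj]
      intro hI
      have hjU : j ∈ m.used := hI j (Or.inr ⟨r, M, a⟩)
      have hkU : k ∈ m.used := hI k (Or.inl (by simp))
      refine ⟨?_, fun x hx => hx, ?_, ?_⟩
      · intro c hc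
        rcases hc with hc | ⟨r', M', hr'⟩
        · rw [txNames_renameTx] at hc
          obtain ⟨x, hx, hxc⟩ := List.mem_map.1 hc
          split_ifs at hxc with hxk
          · exact hxc ▸ hjU
          · exact hI c (Or.inl (hxc ▸ hx))
        · simp only [renameWork] at hr'
          obtain ⟨p, hp, hfp⟩ := Option.map_eq_some_iff.1 hr'
          split_ifs at hfp with hpk
          · simp at hfp
            exact hfp.2 ▸ hjU
          · exact hI c (Or.inr ⟨r', M', hfp ▸ hp⟩)
      · rintro c ⟨hno, hcU⟩
        have hck : c ≠ k := fun h => hno (Or.inl (by simp [h]))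
        have hcj : c ≠ j := fun h => hno (Or.inr ⟨r, M, by rw [h]; exact a⟩)
        refine ⟨⟨?_, hcU⟩, ?_⟩
        · rintro (hc | ⟨r', M', hr'⟩)
          · rw [txNames_renameTx] at hc
            obtain ⟨x, hx, hxc⟩ := List.mem_map.1 hc
            split_ifs at hxc with hxk
            · exact hcj hxc.symm
            · exact hno (Or.inl (hxc ▸ hx))
          · simp only [renameWork] at hr'
            obtain ⟨p, hp, hfp⟩ := Option.map_eq_some_iff.1 hr'
            split_ifs at hfp with hpk
            · simp at hfp
              exact hcj hfp.2.symm
            · exact hno (Or.inr ⟨r', M', hfp ▸ hp⟩)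
        · intro j' hj'
          simp at hj'
          exact hck hj'.1
      · intro c j' hm
        simp at hm
        obtain ⟨hck, hjj⟩ := hm
        subst hck
        subst hjj
        refine ⟨fun h => hkj h.symm, ⟨?_, hkU⟩, ?_⟩
        · rintro (hc | ⟨r', M', hr'⟩)
          · rw [txNames_renameTx] at hc
            obtain ⟨x, hx, hxc⟩ := List.mem_map.1 hc
            split_ifs at hxc with hxk
            · exact hkj hxc.symm
            · exact hxk hxc
          · simp only [renameWork] at hr'
            obtain ⟨p, hp, hfp⟩ := Option.map_eq_some_iff.1 hr'
            split_ifs at hfp with hpk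
            · simp at hfp
              exact hkj hfp.2.symm
            · exact hpk (by rw [hfp])
        · intro j₂ hj₂
          simpa using hj₂
  | write2 a =>
    rename_i m P E t k j M M₀ N r
    by_cases hkj : k = j
    · subst hkj
      rw [renameWork_self, renameTx_self]
      exact good_newclaim _ _ _ _ _ _ _ _ _ _ (by simp)
    · rw [if_neg hkj]
      intro hI
      have hjU : j ∈ m.used := hI j (Or.inr ⟨r, M₀, a⟩)
      have hkU : k ∈ m.used := hI k (Or.inl (by simp))
      refine ⟨?_, fun x hx => hx, ?_, ?_⟩
      · intro c hc
        rcases hc with hc | ⟨r', M', hr'⟩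
        · rw [txNames_renameTx] at hc
          obtain ⟨x, hx, hxc⟩ := List.mem_map.1 hc
          split_ifs at hxc with hxk
          · exact hxc ▸ hjU
          · exact hI c (Or.inl (hxc ▸ hx))
        · by_cases hrr : r' = r
          · have : c = j := by simp [updFn, hrr] at hr'; exact hr'.2.symm
            exact this ▸ hjU
          · simp only [updFn, if_neg hrr, renameWork] at hr'
            obtain ⟨p, hp, hfp⟩ := Option.map_eq_some_iff.1 hr'
            split_ifs at hfp with hpk
            · simp at hfp
              exact hfp.2 ▸ hjU
            · exact hI c (Or.inr ⟨r', M', hfp ▸ hp⟩)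
      · rintro c ⟨hno, hcU⟩
        have hck : c ≠ k := fun h => hno (Or.inl (by simp [h]))
        have hcj : c ≠ j := fun h => hno (Or.inr ⟨r, M₀, by rw [h]; exact a⟩)
        refine ⟨⟨?_, hcU⟩, ?_⟩
        · rintro (hc | ⟨r', M', hr'⟩)
          · rw [txNames_renameTx] at hc
            obtain ⟨x, hx, hxc⟩ := List.mem_map.1 hc
            split_ifs at hxc with hxk
            · exact hcj hxc.symm
            · exact hno (Or.inl (hxc ▸ hx))
          · by_cases hrr : r' = r
            · have : c = j := by simp [updFn, hrr] at hr'; exact hr'.2.symm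
              exact hcj this
            · simp only [updFn, if_neg hrr, renameWork] at hr'
              obtain ⟨p, hp, hfp⟩ := Option.map_eq_some_iff.1 hr'
              split_ifs at hfp with hpk
              · simp at hfp
                exact hcj hfp.2.symm
              · exact hno (Or.inr ⟨r', M', hfp ▸ hp⟩)
        · intro j' hj'
          simp at hj'
          exact hck hj'.1
      · intro c j' hm
        simp at hm
        obtain ⟨hck, hjj⟩ := hm
        subst hck
        subst hjj
        refine ⟨fun h => hkj h.symm, ⟨?_, hkU⟩, ?_⟩
        · rintro (hc | ⟨r', M', hr'⟩)
          · rw [txNames_renameTx] at hc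
            obtain ⟨x, hx, hxc⟩ := List.mem_map.1 hc
            split_ifs at hxc with hxk
            · exact hkj hxc.symm
            · exact hxk hxc
          · by_cases hrr : r' = r
            · simp [updFn, hrr] at hr'
              exact hkj hr'.2.symm
            · simp only [updFn, if_neg hrr, renameWork] at hr'
              obtain ⟨p, hp, hfp⟩ := Option.map_eq_some_iff.1 hr'
              split_ifs at hfp with hpk
              · simp at hfp
                exact hkj hfp.2.symm
              · exact hpk (by rw [hfp])
        · intro j₂ hj₂
          simpa using hj₂
  | mcastAb h1 h2 ih1 ih2 =>
    intro hI
    obtain ⟨i1, su1, pres1, mg1⟩ := ih1 (invUsed_append_left hI)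
    obtain ⟨i2, su2, pres2, mg2⟩ := ih2 (invUsed_append_right hI)
    refine ⟨?_, su1, ?_, ?_⟩
    · intro c hc
      rcases occurs_append.1 hc with hc | hc | hc
      · exact i1 c (Or.inl hc)
      · exact i2 c (Or.inl hc)
      · exact i1 c (Or.inr hc)
    · intro c hc
      obtain ⟨hcP, hcQ⟩ := noK_append hc
      obtain ⟨hP', nm1⟩ := pres1 c hcP
      obtain ⟨hQ', nm2⟩ := pres2 c hcQ
      refine ⟨noK_append_intro hP' hQ', fun j hj => ?_⟩
      rcases List.mem_append.1 hj with h | h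
      exacts [nm1 j h, nm2 j h]
    · intro c j hj
      rcases List.mem_append.1 hj with h | h
      · exact absurd (merge_tau h1 c j h) (by simp)
      · exact absurd (merge_tau h2 c j h) (by simp)
  | mcastCo h1 h2 ih1 ih2 =>
    intro hI
    obtain ⟨i1, su1, pres1, mg1⟩ := ih1 (invUsed_append_left hI)
    obtain ⟨i2, su2, pres2, mg2⟩ := ih2 (invUsed_append_right hI)
    refine ⟨?_, su1, ?_, ?_⟩
    · intro c hc
      rcases occurs_append.1 hc with hc | hc | hc
      · exact i1 c (Or.inl hc)
      · exact i2 c (Or.inl hc)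
      · exact i1 c (Or.inr hc)
    · intro c hc
      obtain ⟨hcP, hcQ⟩ := noK_append hc
      obtain ⟨hP', nm1⟩ := pres1 c hcP
      obtain ⟨hQ', nm2⟩ := pres2 c hcQ
      refine ⟨noK_append_intro hP' hQ', fun j hj => ?_⟩
      rcases List.mem_append.1 (List.mem_dedup.1 hj) with h | h
      exacts [nm1 j h, nm2 j h]
    · intro c j hj
      rcases List.mem_append.1 (List.mem_dedup.1 hj) with h | h
      · exact absurd (merge_tau h1 c j h) (by simp)
      · exact absurd (merge_tau h2 c j h) (by simp)
  | mcastGroup h1 hβ hQmem ih =>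
    intro hI
    obtain ⟨i1, su1, pres1, mg1⟩ := ih (invUsed_append_left hI)
    refine ⟨?_, su1, ?_, ?_⟩
    · intro c hc
      rcases occurs_append.1 hc with hc | hc | hc
      · exact i1 c (Or.inl hc)
      · exact su1 (hI c (occurs_append_r (Or.inl hc)))
      · exact i1 c (Or.inr hc)
    · intro c hc
      obtain ⟨hcP, hcQ⟩ := noK_append hc
      obtain ⟨hP', nm1⟩ := pres1 c hcP
      refine ⟨noK_append_intro hP' ⟨fun hh => ?_, hP'.2⟩, nm1⟩
      rcases hh with hh | hh
      · exact hcQ.1 (Or.inl hh)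
      · exact hP'.1 (Or.inr hh)
    · intro c j hj
      have htau := merge_tau h1 c j hj
      rw [htau] at hβ
      simp [Label.txName] at hβ
  | refl s => exact good_refl s
  | cons _ _ ih1 ih2 => exact good_comp ih1 ih2

lemma exec_good {V : Term → Option Term} :
    ∀ {s : MState} {H : History} {s' : MState}, Exec V s H s' → Good s H s' := by
  intro s H s' h
  induction h with
  | refl => exact good_refl _
  | step hst _ ih => exact good_comp (step_good hst) ih

/-- Each transaction name can be the source of at most one merge: once a
    `Read2` or `Write2` transition (the only transitions issuing merges)
    merges transaction `k` into transaction `j` (renaming every occurrence of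
    `k` in the working memory and in the thread family to `j`, with `j ≠ k`),
    the name `k` no longer occurs in any subsequent state of the execution,
    and hence no later transition can merge `k` into any transaction.
    Consequently, in the opacity graph of the history of any execution,
    every vertex has at most one outgoing merge-induced edge. -/
theorem otm_merge_at_most_once (V : Term → Option Term) (M₀ : Term) (t₀ : TId) :
    (∀ H₁ s, Exec V (initState M₀ t₀) H₁ s →
      ∀ β ops s₁, Step V s β ops s₁ →
        ∀ k j, j ≠ k → Op.merge k j ∈ ops →
          -- `k` is gone right after the merging transition …
          ¬ OccursIn k s₁ ∧
          -- … and in every subsequent state; no later transition merges `k`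
          ∀ H₂ s₂, Exec V s₁ H₂ s₂ →
            (∀ j', Op.merge k j' ∉ H₂) ∧ ¬ OccursIn k s₂) ∧
    -- at most one outgoing merge-induced edge per vertex
    (∀ H s, Exec V (initState M₀ t₀) H s →
      ∀ k j j', Op.merge k j ∈ H → Op.merge k j' ∈ H → j = j') := by
  have hI0 : InvUsed (initState M₀ t₀) := by
    rintro c (hc | ⟨r, M', hr⟩)
    · simp [initState] at hc
    · simp [initState] at hr
  constructor
  · intro H₁ s hex β ops s₁ hst k j _ hm
    have hIs : InvUsed s := (exec_good hex hI0).1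
    obtain ⟨hI1, _, _, mg⟩ := step_good hst hIs
    obtain ⟨_, hNoK, _⟩ := mg k j hm
    refine ⟨hNoK.1, ?_⟩
    intro H₂ s₂ hex2
    obtain ⟨_, _, pres2, _⟩ := exec_good hex2 hI1
    obtain ⟨hk2, hnm⟩ := pres2 k hNoK
    exact ⟨hnm, hk2.1⟩
  · intro H s hex k j j' h1 h2
    obtain ⟨_, _, _, mg⟩ := exec_good hex hI0
    exact (mg k j' h2).2.2 j h1
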